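/- Let G be a graph with m edges, no isolated vertices, and no subgraph isomorphic to C_6^△, maximizing the spectral radius among such graphs, and let x be the Perron eigenvector of G with extremal vertex u* (a vertex where x attains its maximum). Then no vertex of G other than u* is a cut vertex of G. -/

import Mathlib

open SimpleGraph

open scoped Classical in
/-- Real adjacency matrix of a simple graph. -/
noncomputable def adjMat {V : Type*} [Fintype V] (G : SimpleGraph V) : Matrix V V ℝ :=
  Matrix.of fun u v => if G.Adj u v then (1 : ℝ) else 0

/-- `G` contains a subgraph isomorphic to `F`. -/
def Copies {α β : Type*} (F : SimpleGraph α) (G : SimpleGraph β) : Prop :=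
  ∃ f : F →g G, Function.Injective f

/-- The join `K_k ∇ t·K_1`. -/
def cliqueJoinIndep (k t : ℕ) : SimpleGraph (Fin k ⊕ Fin t) where
  Adj u v := u ≠ v ∧ (u.isLeft = true ∨ v.isLeft = true)
  symm := ⟨fun u v ⟨h1, h2⟩ => ⟨h1.symm, h2.symm⟩⟩
  loopless := ⟨fun u ⟨h, _⟩ => h rfl⟩

instance (k t : ℕ) : DecidableRel (cliqueJoinIndep k t).Adj := fun u v =>
  inferInstanceAs (Decidable (u ≠ v ∧ (u.isLeft = true ∨ v.isLeft = true)))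

/-- `C_t^△`: the cycle `C_t` plus one extra vertex joined to the adjacent
vertices `0` and `1` of the cycle. -/
def cycTri (t : ℕ) : SimpleGraph (Fin t ⊕ Unit) :=
  SimpleGraph.fromRel (fun u v =>
    match u, v with
    | .inl i, .inl j => (cycleGraph t).Adj i j
    | .inl i, .inr _ => i.val = 0 ∨ i.val = 1
    | .inr _, _ => False)

noncomputable def specRad {V : Type*} [Fintype V] [DecidableEq V] (G : SimpleGraph V) : ℝ :=
  sSup (spectrum ℝ (adjMat G))

/-- A cut vertex: its deletion increases the number of connected components. -/
def IsCutVertex {V : Type*} (G : SimpleGraph V) (v : V) : Prop :=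
  Nat.card G.ConnectedComponent <
    Nat.card (G.induce ({v}ᶜ : Set V)).ConnectedComponent


open Matrix in
lemma rayleigh_key {n : Type*} [Fintype n] [DecidableEq n] [Nonempty n]
    {A : Matrix n n ℝ} (hA : A.IsHermitian) (x : n → ℝ) (hx : x ⬝ᵥ x = 1) :
    x ⬝ᵥ A.mulVec x ≤ sSup (spectrum ℝ A) ∧
      (x ⬝ᵥ A.mulVec x = sSup (spectrum ℝ A) → A.mulVec x = sSup (spectrum ℝ A) • x) := by
  classical
  set μ := sSup (spectrum ℝ A) with hμ
  have hspec : spectrum ℝ A = Set.range hA.eigenvalues := hA.spectrum_real_eq_range_eigenvalues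
  have hbdd : BddAbove (spectrum ℝ A) := (Set.finite_range hA.eigenvalues).bddAbove.mono hspec.le
  have hle : ∀ i, hA.eigenvalues i ≤ μ := fun i =>
    le_csSup hbdd (hspec ▸ Set.mem_range_self i)
  set U : Matrix n n ℝ := (hA.eigenvectorUnitary : Matrix n n ℝ) with hU
  have hstar : star U = Uᵀ := by
    rw [Matrix.star_eq_conjTranspose, Matrix.conjTranspose_eq_transpose_of_trivial]
  have hUU : U * star U = 1 := (Matrix.mem_unitaryGroup_iff).mp hA.eigenvectorUnitary.2
  set y : n → ℝ := (star U).mulVec x with hy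
  have hUy : U.mulVec y = x := by
    rw [hy, Matrix.mulVec_mulVec, hUU, Matrix.one_mulVec]
  have hAspec : A = U * Matrix.diagonal hA.eigenvalues * star U := by
    have := hA.spectral_theorem
    simpa using this
  have hvm : x ᵥ* U = y := by
    rw [hy, hstar, ← vecMul_transpose, transpose_transpose]
  have hyy : y ⬝ᵥ y = 1 := by
    calc y ⬝ᵥ y = y ⬝ᵥ (star U) *ᵥ x := by rw [← hy]
    _ = (y ᵥ* star U) ⬝ᵥ x := by rw [dotProduct_mulVec]
    _ = (U *ᵥ y) ⬝ᵥ x := by rw [hstar, vecMul_transpose]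
    _ = 1 := by rw [hUy, hx]
  have hquad : x ⬝ᵥ A.mulVec x = ∑ i, hA.eigenvalues i * (y i * y i) := by
    calc x ⬝ᵥ A.mulVec x = x ⬝ᵥ (U *ᵥ ((Matrix.diagonal hA.eigenvalues) *ᵥ ((star U) *ᵥ x))) := by
          conv_lhs => rw [hAspec]
          simp only [← Matrix.mulVec_mulVec]
    _ = (x ᵥ* U) ⬝ᵥ ((Matrix.diagonal hA.eigenvalues) *ᵥ y) := by
          rw [dotProduct_mulVec, ← hy]
    _ = y ⬝ᵥ ((Matrix.diagonal hA.eigenvalues) *ᵥ y) := by rw [hvm]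
    _ = ∑ i, hA.eigenvalues i * (y i * y i) := by
          simp [dotProduct, Matrix.mulVec_diagonal]
          exact Finset.sum_congr rfl fun i _ => by ring
  have hsumy : ∑ i, y i * y i = 1 := hyy
  have hmax : x ⬝ᵥ A.mulVec x ≤ μ := by
    rw [hquad]
    calc ∑ i, hA.eigenvalues i * (y i * y i) ≤ ∑ i, μ * (y i * y i) := by
          apply Finset.sum_le_sum
          intro i _
          exact mul_le_mul_of_nonneg_right (hle i) (mul_self_nonneg _)
    _ = μ := by rw [← Finset.mul_sum, hsumy, mul_one]
  refine ⟨hmax, fun heq => ?_⟩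
  have hzero : ∑ i, (μ - hA.eigenvalues i) * (y i * y i) = 0 := by
    have : ∑ i, (μ - hA.eigenvalues i) * (y i * y i)
        = μ * ∑ i, y i * y i - ∑ i, hA.eigenvalues i * (y i * y i) := by
      rw [Finset.mul_sum, ← Finset.sum_sub_distrib]
      exact Finset.sum_congr rfl fun i _ => by ring
    rw [this, hsumy, mul_one, ← hquad, heq]
    ring
  have hterm : ∀ i ∈ Finset.univ, (μ - hA.eigenvalues i) * (y i * y i) = 0 := by
    rw [← Finset.sum_eq_zero_iff_of_nonneg]
    · exact hzero
    · intro i _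
      exact mul_nonneg (by linarith [hle i]) (mul_self_nonneg _)
  have hDy : (Matrix.diagonal hA.eigenvalues) *ᵥ y = μ • y := by
    funext i
    rw [Matrix.mulVec_diagonal]
    have := hterm i (Finset.mem_univ i)
    rcases mul_eq_zero.mp this with h | h
    · have : hA.eigenvalues i = μ := by linarith
      simp [this, Pi.smul_apply]
    · have : y i = 0 := by nlinarith [mul_self_nonneg (y i)]
      simp [this]
  calc A *ᵥ x = U *ᵥ ((Matrix.diagonal hA.eigenvalues) *ᵥ ((star U) *ᵥ x)) := by
        conv_lhs => rw [hAspec]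
        simp only [← Matrix.mulVec_mulVec]
  _ = U *ᵥ (μ • y) := by rw [← hy, hDy]
  _ = μ • (U *ᵥ y) := by rw [Matrix.mulVec_smul]
  _ = μ • x := by rw [hUy]

def inducedHom {V : Type*} (G : SimpleGraph V) (s : Set V) : G.induce s →g G :=
  ⟨Subtype.val, fun {a b} h => h⟩

lemma cut_structure {V : Type*} [Fintype V] [DecidableEq V] (G : SimpleGraph V) (w u : V)
    (hwu : w ≠ u) (hcut : IsCutVertex G w) :
    ∃ C : Set V, (∀ a b, a ∈ C → b ∉ C → b ≠ w → ¬ G.Adj a b) ∧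
      (∃ z, z ∈ C ∧ G.Adj w z) ∧ u ∉ C ∧ w ∉ C ∧ (∃ y, G.Adj w y ∧ y ∉ C) := by
  classical
  set K := G.induce ({w}ᶜ : Set V) with hK
  have hmem : ∀ a : V, a ≠ w → a ∈ ({w}ᶜ : Set V) := by
    intro a ha; simp [ha]
  have hKadj : ∀ (a b : ({w}ᶜ : Set V)), G.Adj a.1 b.1 → K.Adj a b := by
    intro a b h; exact h
  -- step 1 : there exist neighbors of w in different components of K
  have step1 : ∃ z y, ∃ (hz : G.Adj w z) (hy : G.Adj w y),
      ¬ K.Reachable ⟨z, hmem z hz.ne'⟩ ⟨y, hmem y hy.ne'⟩ := by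
    by_contra hcon
    push_neg at hcon
    have hnb : ∀ p q (hp : G.Adj w p) (hq : G.Adj w q),
        K.Reachable ⟨p, hmem p hp.ne'⟩ ⟨q, hmem q hq.ne'⟩ := by
      intro p q hp hq
      exact hcon p q hp hq
    have key : ∀ (N : ℕ) (p q : V) (W : G.Walk p q), W.length ≤ N →
        ∀ (hp : p ∈ ({w}ᶜ : Set V)) (hq : q ∈ ({w}ᶜ : Set V)),
        K.Reachable ⟨p, hp⟩ ⟨q, hq⟩ := by
      intro N
      induction N with
      | zero =>
        intro p q W hW hp hq
        cases W with
        | nil => rfl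
        | cons h W' => simp [SimpleGraph.Walk.length_cons] at hW
      | succ N ih =>
        intro p q W hW hp hq
        cases W with
        | nil => rfl
        | @cons _ r _ h W' =>
          by_cases hr : r = w
          · subst hr
            cases W' with
            | nil => exact absurd rfl hq
            | @cons _ s _ h2 W'' =>
              have hpr : G.Adj r p := h.symm
              have h1 : K.Reachable ⟨p, hmem p hpr.ne'⟩ ⟨s, hmem s h2.ne'⟩ :=
                hnb p s hpr h2
              have h2' : K.Reachable ⟨s, hmem s h2.ne'⟩ ⟨q, hq⟩ := by
                refine ih s q W'' ?_ (hmem s h2.ne') hq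
                have hlen : W''.length + 1 + 1 ≤ N + 1 := by
                  simpa [SimpleGraph.Walk.length_cons] using hW
                omega
              exact h1.trans h2'
          · have hadj : K.Adj ⟨p, hp⟩ ⟨r, hmem r hr⟩ := hKadj _ _ h
            have h2' : K.Reachable ⟨r, hmem r hr⟩ ⟨q, hq⟩ := by
              refine ih r q W' ?_ (hmem r hr) hq
              have hlen : W'.length + 1 ≤ N + 1 := by
                simpa [SimpleGraph.Walk.length_cons] using hW
              omega
            exact hadj.reachable.trans h2'
    -- injection from components of K to components of G
    have hinj : Function.Injective
        (SimpleGraph.ConnectedComponent.map (inducedHom G ({w}ᶜ : Set V))) := by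
      intro c d
      refine SimpleGraph.ConnectedComponent.ind₂ (fun a b => ?_) c d
      intro hcd
      simp only [SimpleGraph.ConnectedComponent.map_mk] at hcd
      rw [SimpleGraph.ConnectedComponent.eq] at hcd ⊢
      have hcd' : G.Reachable a.1 b.1 := by exact hcd
      obtain ⟨W⟩ := hcd'
      exact key W.length _ _ W le_rfl a.2 b.2
    have hfin : Finite G.ConnectedComponent :=
      Finite.of_surjective G.connectedComponentMk (fun c => c.exists_rep)
    have hle : Nat.card K.ConnectedComponent ≤ Nat.card G.ConnectedComponent :=
      Nat.card_le_card_of_injective _ hinj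
    have hlt : Nat.card G.ConnectedComponent < Nat.card K.ConnectedComponent := hcut
    omega
  obtain ⟨z, y, hz, hy, hnr⟩ := step1
  have huw : u ∈ ({w}ᶜ : Set V) := hmem u (Ne.symm hwu)
  -- helper building the component set
  have build : ∀ (z y : V) (hz : G.Adj w z) (hy : G.Adj w y),
      ¬ K.Reachable ⟨z, hmem z hz.ne'⟩ ⟨y, hmem y hy.ne'⟩ →
      ¬ K.Reachable ⟨u, huw⟩ ⟨z, hmem z hz.ne'⟩ →
      ∃ C : Set V, (∀ a b, a ∈ C → b ∉ C → b ≠ w → ¬ G.Adj a b) ∧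
      (∃ z', z' ∈ C ∧ G.Adj w z') ∧ u ∉ C ∧ w ∉ C ∧ (∃ y', G.Adj w y' ∧ y' ∉ C) := by
    intro z y hz hy hnr hur
    refine ⟨{a : V | ∃ h : a ∈ ({w}ᶜ : Set V), K.Reachable ⟨a, h⟩ ⟨z, hmem z hz.ne'⟩}, ?_, ?_, ?_, ?_, ?_⟩
    · rintro a b ⟨ha, hra⟩ hb hbw hadj
      exact hb ⟨hmem b hbw, ((hKadj ⟨b, hmem b hbw⟩ ⟨a, ha⟩ hadj.symm).reachable).trans hra⟩
    · exact ⟨z, ⟨hmem z hz.ne', SimpleGraph.Reachable.refl _⟩, hz⟩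
    · rintro ⟨h, hr⟩
      exact hur (by convert hr)
    · rintro ⟨h, _⟩
      simp at h
    · refine ⟨y, hy, ?_⟩
      rintro ⟨h, hr⟩
      exact hnr (by convert hr.symm)
  by_cases hcase : K.Reachable ⟨u, huw⟩ ⟨z, hmem z hz.ne'⟩
  · refine build y z hy hz (fun h => hnr h.symm) ?_
    intro hr
    exact hnr (hcase.symm.trans hr)
  · exact build z y hz hy hnr hcase

def triRel : Fin 6 ⊕ Unit → Fin 6 ⊕ Unit → Prop := fun u v =>
  match u, v with
  | .inl i, .inl j => (cycleGraph 6).Adj i j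
  | .inl i, .inr _ => i.val = 0 ∨ i.val = 1
  | .inr _, _ => False

instance : DecidableRel triRel := fun a b =>
  match a, b with
  | .inl i, .inl j => inferInstanceAs (Decidable ((cycleGraph 6).Adj i j))
  | .inl i, .inr _ => inferInstanceAs (Decidable (_ ∨ _))
  | .inr _, .inl _ => inferInstanceAs (Decidable False)
  | .inr _, .inr _ => inferInstanceAs (Decidable False)

lemma cycTri_adj_iff (a b : Fin 6 ⊕ Unit) :
    (cycTri 6).Adj a b ↔ a ≠ b ∧ (triRel a b ∨ triRel b a) := by
  rw [cycTri, SimpleGraph.fromRel_adj]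
  cases a <;> cases b <;> rfl

instance : DecidableRel (cycTri 6).Adj := fun a b =>
  decidable_of_iff' _ (cycTri_adj_iff a b)

def ham : ZMod 7 → (Fin 6 ⊕ Unit) := fun i =>
  match i.val with
  | 0 => .inl 0
  | 1 => .inr ()
  | 2 => .inl 1
  | 3 => .inl 2
  | 4 => .inl 3
  | 5 => .inl 4
  | _ => .inl 5

lemma ham_inj : Function.Injective ham := by decide

lemma ham_adj : ∀ i : ZMod 7, (cycTri 6).Adj (ham i) (ham (i + 1)) := by decide

lemma crossing {V : Type*} (H : SimpleGraph V) (C : Set V) (u : V) (hu : u ∉ C)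
    (hedge : ∀ a b, H.Adj a b → ((a ∉ C ∧ b ∉ C) ∨ ((a ∈ C ∨ a = u) ∧ (b ∈ C ∨ b = u))))
    (f : (Fin 6 ⊕ Unit) → V) (hf : Function.Injective f)
    (hadj : ∀ p q, (cycTri 6).Adj p q → H.Adj (f p) (f q)) :
    (∀ p, f p ∉ C) ∨ (∀ p, f p ∈ C ∨ f p = u) := by
  classical
  by_contra hcon
  push_neg at hcon
  obtain ⟨⟨p0, hp0⟩, q0, hq0C, hq0u⟩ := hcon
  set c : ZMod 7 → V := f ∘ ham with hc
  have hcinj : Function.Injective c := hf.comp ham_inj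
  have hsurj : Function.Surjective ham :=
    (Fintype.bijective_iff_injective_and_card ham).mpr ⟨ham_inj, by simp⟩ |>.surjective
  obtain ⟨i, hi⟩ := hsurj p0
  obtain ⟨j, hj⟩ := hsurj q0
  have hci : c i ∈ C := by rw [hc]; simpa [hi] using hp0
  have hcjC : c j ∉ C := by rw [hc]; simpa [hj] using hq0C
  have hcju : c j ≠ u := by rw [hc]; simpa [hj] using hq0u
  have hHadj : ∀ k : ZMod 7, H.Adj (c k) (c (k + 1)) := fun k => hadj _ _ (ham_adj k)
  have exit : ∀ k : ZMod 7, c k ∈ C → c (k + 1) ∉ C → c (k + 1) = u := by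
    intro k h1 h2
    rcases hedge _ _ (hHadj k) with ⟨h3, _⟩ | ⟨_, h4 | h4⟩
    · exact absurd h1 h3
    · exact absurd h4 h2
    · exact h4
  have entry : ∀ k : ZMod 7, c k ∉ C → c (k + 1) ∈ C → c k = u := by
    intro k h1 h2
    rcases hedge _ _ (hHadj k) with ⟨_, h3⟩ | ⟨h4 | h4, _⟩
    · exact absurd h2 h3
    · exact absurd h4 h1
    · exact h4
  -- find the entry point k₂
  have hQ : ∃ t : ℕ, c (j + (t : ZMod 7)) ∈ C := by
    refine ⟨(i - j).val, ?_⟩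
    rw [ZMod.natCast_rightInverse (i - j)]
    simpa using hci
  set t₀ := Nat.find hQ with ht₀def
  have ht₀ : c (j + (t₀ : ZMod 7)) ∈ C := Nat.find_spec hQ
  have ht₀pos : t₀ ≠ 0 := by
    intro h
    rw [h] at ht₀
    apply hcjC
    simpa using ht₀
  set k₂ : ZMod 7 := j + ((t₀ - 1 : ℕ) : ZMod 7) with hk₂
  have hk₂succ : k₂ + 1 = j + (t₀ : ZMod 7) := by
    rw [hk₂]
    have : ((t₀ - 1 : ℕ) : ZMod 7) + 1 = (t₀ : ZMod 7) := by
      have h1 : t₀ - 1 + 1 = t₀ := Nat.sub_add_cancel (Nat.one_le_iff_ne_zero.mpr ht₀pos)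
      calc ((t₀ - 1 : ℕ) : ZMod 7) + 1 = ((t₀ - 1 + 1 : ℕ) : ZMod 7) := by push_cast; ring
      _ = (t₀ : ZMod 7) := by rw [h1]
    rw [add_assoc, this]
  have hk₂notP : c k₂ ∉ C := Nat.find_min hQ (by omega)
  have hk₂u : c k₂ = u := by
    apply entry k₂ hk₂notP
    rw [hk₂succ]; exact ht₀
  have hk₂P : c (k₂ + 1) ∈ C := by rw [hk₂succ]; exact ht₀
  -- backward induction from j
  have back : ∀ t : ℕ, c (j - (t : ZMod 7)) ∉ C ∧ c (j - (t : ZMod 7)) ≠ u := by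
    intro t
    induction t with
    | zero => simpa using ⟨hcjC, hcju⟩
    | succ t ih =>
      obtain ⟨ih1, ih2⟩ := ih
      have harith : j - ((t + 1 : ℕ) : ZMod 7) + 1 = j - (t : ZMod 7) := by
        push_cast
        ring
      constructor
      · intro hmem
        have := exit _ hmem (by rw [harith]; exact ih1)
        rw [harith] at this
        exact ih2 this
      · intro heq
        have : j - ((t + 1 : ℕ) : ZMod 7) = k₂ := hcinj (by rw [heq, hk₂u])
        have : j - ((t + 1 : ℕ) : ZMod 7) + 1 = k₂ + 1 := by rw [this]
        rw [harith] at this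
        rw [this] at ih1
        exact ih1 hk₂P
  have hmain := back (j - i).val
  rw [ZMod.natCast_rightInverse (j - i)] at hmain
  have : j - (j - i) = i := by ring
  rw [this] at hmain
  exact hmain.1 hci

/-- The modified graph: delete the edges from `w` to `S`, add edges from `u` to `S`. -/
def modGraph {V : Type*} (G : SimpleGraph V) (w u : V) (S : Set V) : SimpleGraph V where
  Adj a b := a ≠ b ∧ ((G.Adj a b ∧ ¬(a = w ∧ b ∈ S) ∧ ¬(b = w ∧ a ∈ S)) ∨
    (a = u ∧ b ∈ S) ∨ (b = u ∧ a ∈ S))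
  symm := ⟨fun a b => by
    rintro ⟨hne, h⟩
    refine ⟨hne.symm, ?_⟩
    rcases h with ⟨h1, h2, h3⟩ | h | h
    exacts [Or.inl ⟨h1.symm, h3, h2⟩, Or.inr (Or.inr h), Or.inr (Or.inl h)]⟩
  loopless := ⟨fun a => by rintro ⟨hne, _⟩; exact hne rfl⟩

lemma modGraph_adj {V : Type*} (G : SimpleGraph V) (w u : V) (S : Set V) (a b : V) :
    (modGraph G w u S).Adj a b ↔ a ≠ b ∧ ((G.Adj a b ∧ ¬(a = w ∧ b ∈ S) ∧ ¬(b = w ∧ a ∈ S)) ∨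
    (a = u ∧ b ∈ S) ∨ (b = u ∧ a ∈ S)) := Iff.rfl

theorem no_cut_vertex_besides_extremal {V : Type*} [Fintype V] [DecidableEq V] (G : SimpleGraph V)
    (m : ℕ) (hm : G.edgeSet.ncard = m)
    (hnoiso : ∀ v : V, ∃ w, G.Adj v w)
    (hfree : ¬ Copies (cycTri 6) G)
    (hmax : ∀ (n : ℕ) (H : SimpleGraph (Fin n)), H.edgeSet.ncard = m →
      (∀ v, ∃ w, H.Adj v w) → ¬ Copies (cycTri 6) H → specRad H ≤ specRad G)
    (x : V → ℝ) (hpos : ∀ v, 0 < x v) (hunit : ∑ v, x v ^ 2 = 1)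
    (heig : (adjMat G).mulVec x = specRad G • x)
    (u : V) (hu : ∀ v, x v ≤ x u) :
    ∀ w : V, w ≠ u → ¬ IsCutVertex G w := by
  classical
  intro w hwu hcut
  have hVne : Nonempty V := by
    by_contra h
    rw [not_nonempty_iff] at h
    rw [Finset.univ_eq_empty, Finset.sum_empty] at hunit
    norm_num at hunit
  -- Step A: structure of the cut vertex
  obtain ⟨C, PC1, ⟨z, hzC, hz⟩, huC, hwC, ⟨y, hy, hyC⟩⟩ := cut_structure G w u hwu hcut
  set S : Set V := {b | b ∈ C ∧ G.Adj w b} with hSdef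
  have hSsub : S ⊆ C := fun b hb => hb.1
  have hwS : w ∉ S := fun h => hwC h.1
  have huS : u ∉ S := fun h => huC h.1
  have hSadj : ∀ b ∈ S, G.Adj w b := fun b hb => hb.2
  have huw : u ≠ w := Ne.symm hwu
  have hGuC : ∀ b ∈ C, ¬ G.Adj u b := by
    intro b hb hadj
    exact PC1 b u hb huC huw hadj.symm
  have hzS : z ∈ S := ⟨hzC, hz⟩
  set H : SimpleGraph V := modGraph G w u S with hHdef
  -- edge classification for crossing argument
  have hedge : ∀ a b, H.Adj a b →
      ((a ∉ C ∧ b ∉ C) ∨ ((a ∈ C ∨ a = u) ∧ (b ∈ C ∨ b = u))) := by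
    intro a b hab
    rw [hHdef, modGraph_adj] at hab
    obtain ⟨hne, hab⟩ := hab
    rcases hab with ⟨h1, h2, h3⟩ | ⟨rfl, hb⟩ | ⟨rfl, ha⟩
    · by_cases haC : a ∈ C <;> by_cases hbC : b ∈ C
      · exact Or.inr ⟨Or.inl haC, Or.inl hbC⟩
      · exfalso
        by_cases hbw : b = w
        · exact h3 ⟨hbw, haC, hbw ▸ h1.symm⟩
        · exact PC1 a b haC hbC hbw h1
      · exfalso
        by_cases haw : a = w
        · exact h2 ⟨haw, hbC, haw ▸ h1⟩
        · exact PC1 b a hbC haC haw h1.symm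
      · exact Or.inl ⟨haC, hbC⟩
    · exact Or.inr ⟨Or.inr rfl, Or.inl (hSsub hb)⟩
    · exact Or.inr ⟨Or.inl (hSsub ha), Or.inr rfl⟩
  -- no isolated vertices in H
  have hisoH : ∀ v : V, ∃ b, H.Adj v b := by
    intro v
    by_cases hvw : v = w
    · subst hvw
      refine ⟨y, ?_⟩
      rw [hHdef, modGraph_adj]
      refine ⟨hy.ne, Or.inl ⟨hy, ?_, ?_⟩⟩
      · rintro ⟨-, hyS⟩; exact hyC (hSsub hyS)
      · rintro ⟨hyw, -⟩; exact hy.ne' hyw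
    · obtain ⟨b, hb⟩ := hnoiso v
      by_cases hrem : b = w ∧ v ∈ S
      · refine ⟨u, ?_⟩
        rw [hHdef, modGraph_adj]
        refine ⟨fun h => huS (h ▸ hrem.2), Or.inr (Or.inr ⟨rfl, hrem.2⟩)⟩
      · refine ⟨b, ?_⟩
        rw [hHdef, modGraph_adj]
        refine ⟨hb.ne, Or.inl ⟨hb, ?_, ?_⟩⟩
        · rintro ⟨hvw', -⟩; exact hvw hvw'
        · exact hrem
  -- H is cycTri-6-free
  have hHfree : ¬ Copies (cycTri 6) H := by
    rintro ⟨f, finj⟩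
    have hadjf : ∀ p q, (cycTri 6).Adj p q → H.Adj (f p) (f q) := fun p q h => f.map_adj h
    rcases crossing H C u huC hedge f finj hadjf with hcase | hcase
    · refine hfree ⟨⟨⇑f, ?_⟩, finj⟩
      intro p q hpq
      have h : (modGraph G w u S).Adj (f p) (f q) := hadjf p q hpq
      rw [modGraph_adj] at h
      obtain ⟨hne, h⟩ := h
      rcases h with ⟨h1, -, -⟩ | ⟨-, hb⟩ | ⟨-, ha⟩
      · exact h1
      · exact absurd (hSsub hb) (hcase q)
      · exact absurd (hSsub ha) (hcase p)
    · refine hfree ⟨⟨fun p => Equiv.swap u w (f p), ?_⟩, 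
        (Equiv.swap u w).injective.comp finj⟩
      intro p q hpq
      have h : (modGraph G w u S).Adj (f p) (f q) := hadjf p q hpq
      rw [modGraph_adj] at h
      obtain ⟨hne, h⟩ := h
      show G.Adj (Equiv.swap u w (f p)) (Equiv.swap u w (f q))
      have swC : ∀ a ∈ C, Equiv.swap u w a = a := by
        intro a ha
        exact Equiv.swap_apply_of_ne_of_ne (fun e => huC (e ▸ ha)) (fun e => hwC (e ▸ ha))
      rcases hcase p with hpC | hpu <;> rcases hcase q with hqC | hqu
      · -- both in C
        rcases h with ⟨h1, -, -⟩ | ⟨hpu', -⟩ | ⟨hqu', -⟩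
        · rw [swC _ hpC, swC _ hqC]; exact h1
        · exact absurd (hpu' ▸ hpC) huC
        · exact absurd (hqu' ▸ hqC) huC
      · -- f p ∈ C, f q = u
        rw [swC _ hpC, hqu, Equiv.swap_apply_left]
        rcases h with ⟨h1, -, -⟩ | ⟨hpu', -⟩ | ⟨-, hpS⟩
        · exact absurd (hqu ▸ h1).symm (hGuC _ hpC)
        · exact absurd (hpu' ▸ hpC) huC
        · exact (hSadj _ hpS).symm
      · -- f p = u, f q ∈ C
        rw [swC _ hqC, hpu, Equiv.swap_apply_left]
        rcases h with ⟨h1, -, -⟩ | ⟨-, hqS⟩ | ⟨hqu', -⟩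
        · exact absurd (hpu ▸ h1) (hGuC _ hqC)
        · exact hSadj _ hqS
        · exact absurd (hqu' ▸ hqC) huC
      · exact absurd (finj (hpu.trans hqu.symm)) (fun e => (cycTri 6).loopless.irrefl p (e ▸ hpq))
  -- edge count of H
  have hcount : H.edgeSet.ncard = m := by
    set A : Set (Sym2 V) := (fun b => s(w, b)) '' S with hAdef
    set B : Set (Sym2 V) := (fun b => s(u, b)) '' S with hBdef
    have hEdge : H.edgeSet = (G.edgeSet \ A) ∪ B := by
      ext e
      induction e with
      | _ a b =>
        simp only [SimpleGraph.mem_edgeSet, Set.mem_union, Set.mem_diff, hAdef, hBdef,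
          Set.mem_image, hHdef, modGraph_adj]
        have hA : (∃ b', b' ∈ S ∧ s(w, b') = s(a, b)) ↔ ((a = w ∧ b ∈ S) ∨ (b = w ∧ a ∈ S)) := by
          constructor
          · rintro ⟨b', hb', he⟩
            rw [Sym2.eq_iff] at he
            rcases he with ⟨h1, h2⟩ | ⟨h1, h2⟩
            · exact Or.inl ⟨h1.symm, h2 ▸ hb'⟩
            · exact Or.inr ⟨h1.symm, h2 ▸ hb'⟩
          · rintro (⟨rfl, hb⟩ | ⟨rfl, ha⟩)
            · exact ⟨b, hb, rfl⟩
            · exact ⟨a, ha, Sym2.eq_swap⟩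
        have hB : (∃ b', b' ∈ S ∧ s(u, b') = s(a, b)) ↔ ((a = u ∧ b ∈ S) ∨ (b = u ∧ a ∈ S)) := by
          constructor
          · rintro ⟨b', hb', he⟩
            rw [Sym2.eq_iff] at he
            rcases he with ⟨h1, h2⟩ | ⟨h1, h2⟩
            · exact Or.inl ⟨h1.symm, h2 ▸ hb'⟩
            · exact Or.inr ⟨h1.symm, h2 ▸ hb'⟩
          · rintro (⟨rfl, hb⟩ | ⟨rfl, ha⟩)
            · exact ⟨b, hb, rfl⟩
            · exact ⟨a, ha, Sym2.eq_swap⟩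
        rw [hA, hB]
        constructor
        · rintro ⟨hne, ⟨h1, h2, h3⟩ | hnew⟩
          · exact Or.inl ⟨h1, not_or.mpr ⟨h2, h3⟩⟩
          · exact Or.inr hnew
        · rintro (⟨h1, h2⟩ | hnew)
          · exact ⟨h1.ne, Or.inl ⟨h1, (not_or.mp h2).1, (not_or.mp h2).2⟩⟩
          · refine ⟨?_, Or.inr hnew⟩
            rcases hnew with ⟨rfl, hb⟩ | ⟨rfl, ha⟩
            · exact fun e => huS (e ▸ hb)
            · exact fun e => huS (e.symm ▸ ha)
    have hAsub : A ⊆ G.edgeSet := by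
      rintro e ⟨b', hb', rfl⟩
      exact hSadj b' hb'
    have hBdisj : ∀ e ∈ B, e ∉ G.edgeSet := by
      rintro e ⟨b', hb', rfl⟩ h
      exact hGuC b' (hSsub hb') h
    have hcardAB : A.ncard = B.ncard := by
      rw [hAdef, hBdef, Set.ncard_image_of_injOn, Set.ncard_image_of_injOn]
      · intro a ha b hb hab
        simp only at hab
        rw [Sym2.eq_iff] at hab
        rcases hab with ⟨-, h⟩ | ⟨h1, h2⟩
        · exact h
        · exact absurd (h2 ▸ ha) huS
      · intro a ha b hb hab
        simp only at hab
        rw [Sym2.eq_iff] at hab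
        rcases hab with ⟨-, h⟩ | ⟨h1, h2⟩
        · exact h
        · exact absurd (h2 ▸ ha) hwS
    have hAle : A.ncard ≤ G.edgeSet.ncard := Set.ncard_le_ncard hAsub (Set.toFinite _)
    rw [hEdge, Set.ncard_union_eq ?_ (Set.toFinite _) (Set.toFinite _), Set.ncard_diff hAsub]
    · rw [hm] at hAle ⊢
      omega
    · rw [Set.disjoint_left]
      rintro e ⟨he1, -⟩ he2
      exact hBdisj e he2 he1
  -- transfer H to Fin n and apply maximality
  have hspecH : specRad H ≤ specRad G := by
    set n := Fintype.card V with hn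
    set e : V ≃ Fin n := Fintype.equivFin V with he
    set H' : SimpleGraph (Fin n) := H.comap e.symm with hH'
    have hiso : H' ≃g H := ⟨e.symm, by intro a b; rfl⟩
    have hcount' : H'.edgeSet.ncard = m := by
      have h := Nat.card_congr hiso.mapEdgeSet
      rw [Nat.card_coe_set_eq, Nat.card_coe_set_eq] at h
      rw [h, hcount]
    have hiso' : ∀ v : Fin n, ∃ b, H'.Adj v b := by
      intro v
      obtain ⟨b, hb⟩ := hisoH (e.symm v)
      refine ⟨e b, ?_⟩
      show H.Adj (e.symm v) (e.symm (e b))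
      rwa [Equiv.symm_apply_apply]
    have hfree' : ¬ Copies (cycTri 6) H' := by
      rintro ⟨f, finj⟩
      refine hHfree ⟨SimpleGraph.Hom.comp ⟨(e.symm : Fin n → V), fun {a b} h => h⟩ f, ?_⟩
      intro a b hab
      have hab' : e.symm (f a) = e.symm (f b) := hab
      exact finj (e.symm.injective hab')
    have hadjeq : adjMat H' = Matrix.reindexAlgEquiv ℝ ℝ e (adjMat H) := by
      ext a b
      simp only [adjMat, Matrix.of_apply, Matrix.reindexAlgEquiv_apply, Matrix.reindex_apply,
        Matrix.submatrix_apply]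
      rfl
    have hspec' : specRad H' = specRad H := by
      rw [specRad, specRad, hadjeq, AlgEquiv.spectrum_eq]
    rw [← hspec']
    exact hmax n H' hcount' hiso' hfree'
  -- spectral contradiction
  have hherm : ∀ K : SimpleGraph V, (adjMat K).IsHermitian := by
    intro K
    rw [Matrix.IsHermitian]
    ext a b
    simp only [adjMat, Matrix.conjTranspose_apply, Matrix.of_apply, star_trivial]
    rw [if_congr (K.adj_comm b a) rfl rfl]
  have hxx : dotProduct x x = 1 := by
    rw [dotProduct]
    rw [← hunit]
    exact Finset.sum_congr rfl fun v _ => by ring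
  have hQG : dotProduct x ((adjMat G).mulVec x) = specRad G := by
    rw [heig, dotProduct_smul, hxx]
    simp
  set Sf : Finset V := Finset.univ.filter (· ∈ S) with hSf
  set Sw : ℝ := ∑ b ∈ Sf, x b with hSw
  have hzSf : z ∈ Sf := by rw [hSf]; simp [hzS]
  have hSwpos : 0 < Sw := by
    rw [hSw]
    refine Finset.sum_pos (fun b _ => hpos b) ⟨z, hzSf⟩
  have HAdj : ∀ a b, H.Adj a b ↔ a ≠ b ∧ ((G.Adj a b ∧ ¬(a = w ∧ b ∈ S) ∧ ¬(b = w ∧ a ∈ S)) ∨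
      (a = u ∧ b ∈ S) ∨ (b = u ∧ a ∈ S)) := fun a b => modGraph_adj G w u S a b
  have hquadform : ∀ K : SimpleGraph V,
      dotProduct x ((adjMat K).mulVec x) = ∑ a, ∑ b, (if K.Adj a b then x a * x b else 0) := by
    intro K
    simp only [dotProduct, Matrix.mulVec, adjMat, Matrix.of_apply, Finset.mul_sum]
    refine Finset.sum_congr rfl fun a _ => Finset.sum_congr rfl fun b _ => ?_
    by_cases hk : K.Adj a b <;> simp [hk]
  have hkey : ∀ (c : V) (F : V → V → ℝ),
      ∑ a, ∑ b, (if a = c ∧ b ∈ S then F a b else 0) = ∑ b ∈ Sf, F c b := by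
    intro c F
    have h1 : ∀ a : V, (∑ b, if a = c ∧ b ∈ S then F a b else 0)
        = if a = c then ∑ b ∈ Sf, F a b else 0 := by
      intro a
      by_cases hac : a = c
      · rw [if_pos hac, Finset.sum_filter]
        exact Finset.sum_congr rfl fun b _ => by simp [hac]
      · rw [if_neg hac]
        exact Finset.sum_eq_zero fun b _ => by simp [hac]
    rw [Finset.sum_congr rfl (fun a _ => h1 a), Finset.sum_ite_eq' Finset.univ c]
    simp
  have hpt : ∀ a b : V, (if H.Adj a b then x a * x b else 0)
      = (if G.Adj a b then x a * x b else 0) - (if a = w ∧ b ∈ S then x a * x b else 0)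
        - (if b = w ∧ a ∈ S then x a * x b else 0) + (if a = u ∧ b ∈ S then x a * x b else 0)
        + (if b = u ∧ a ∈ S then x a * x b else 0) := by
    intro a b
    by_cases h1 : a = w ∧ b ∈ S
    · have hG : G.Adj a b := h1.1 ▸ hSadj b h1.2
      have hH : ¬ H.Adj a b := by
        rw [HAdj]
        rintro ⟨hne, ⟨-, hc, -⟩ | ⟨hau, -⟩ | ⟨hbu, -⟩⟩
        · exact hc h1
        · exact hwu (h1.1 ▸ hau : w = u)
        · exact huS (hbu ▸ h1.2)
      have h3 : ¬ (a = u ∧ b ∈ S) := fun h => hwu (h1.1.symm.trans h.1)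
      have h4 : ¬ (b = u ∧ a ∈ S) := fun h => hwS (h1.1 ▸ h.2)
      have h2 : ¬ (b = w ∧ a ∈ S) := fun h => hwS (h1.1 ▸ h.2)
      rw [if_neg hH, if_pos hG, if_pos h1, if_neg h2, if_neg h3, if_neg h4]
      ring
    · by_cases h2 : b = w ∧ a ∈ S
      · have hG : G.Adj a b := (h2.1 ▸ hSadj a h2.2).symm
        have hH : ¬ H.Adj a b := by
          rw [HAdj]
          rintro ⟨hne, ⟨-, -, hc⟩ | ⟨hau, -⟩ | ⟨hbu, -⟩⟩
          · exact hc h2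
          · exact huS (hau ▸ h2.2)
          · exact hwu (h2.1 ▸ hbu : w = u)
        have h3 : ¬ (a = u ∧ b ∈ S) := fun h => hwS (h2.1 ▸ h.2)
        have h4 : ¬ (b = u ∧ a ∈ S) := fun h => hwu (h2.1.symm.trans h.1)
        rw [if_neg hH, if_pos hG, if_neg h1, if_pos h2, if_neg h3, if_neg h4]
        ring
      · by_cases h3 : a = u ∧ b ∈ S
        · have hG : ¬ G.Adj a b := by
            intro h
            exact hGuC b (hSsub h3.2) (h3.1 ▸ h)
          have hH : H.Adj a b := by
            rw [HAdj]
            exact ⟨fun e => huS (h3.1 ▸ e ▸ h3.2), Or.inr (Or.inl h3)⟩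
          have h4 : ¬ (b = u ∧ a ∈ S) := fun h => huS (h3.1 ▸ h.2)
          rw [if_pos hH, if_neg hG, if_neg h1, if_neg h2, if_pos h3, if_neg h4]
          ring
        · by_cases h4 : b = u ∧ a ∈ S
          · have hG : ¬ G.Adj a b := by
              intro h
              exact hGuC a (hSsub h4.2) (h4.1 ▸ h.symm)
            have hH : H.Adj a b := by
              rw [HAdj]
              exact ⟨fun e => huS (h4.1 ▸ e ▸ h4.2), Or.inr (Or.inr h4)⟩
            rw [if_pos hH, if_neg hG, if_neg h1, if_neg h2, if_neg h3, if_pos h4]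
            ring
          · have hHG : H.Adj a b ↔ G.Adj a b := by
              rw [HAdj]
              constructor
              · rintro ⟨hne, ⟨hg, -, -⟩ | hn | hn⟩
                · exact hg
                · exact absurd hn h3
                · exact absurd hn h4
              · intro hg
                exact ⟨hg.ne, Or.inl ⟨hg, h1, h2⟩⟩
            rw [if_congr hHG rfl rfl, if_neg h1, if_neg h2, if_neg h3, if_neg h4]
            ring
  have hQH : dotProduct x ((adjMat H).mulVec x) = specRad G + 2 * (x u - x w) * Sw := by
    rw [hquadform H]
    calc ∑ a, ∑ b, (if H.Adj a b then x a * x b else 0)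
        = ∑ a, ∑ b, ((if G.Adj a b then x a * x b else 0)
          - (if a = w ∧ b ∈ S then x a * x b else 0)
          - (if b = w ∧ a ∈ S then x a * x b else 0)
          + (if a = u ∧ b ∈ S then x a * x b else 0)
          + (if b = u ∧ a ∈ S then x a * x b else 0)) := by
          exact Finset.sum_congr rfl fun a _ => Finset.sum_congr rfl fun b _ => hpt a b
    _ = (∑ a, ∑ b, (if G.Adj a b then x a * x b else 0))
          - (∑ a, ∑ b, (if a = w ∧ b ∈ S then x a * x b else 0))
          - (∑ a, ∑ b, (if b = w ∧ a ∈ S then x a * x b else 0))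
          + (∑ a, ∑ b, (if a = u ∧ b ∈ S then x a * x b else 0))
          + (∑ a, ∑ b, (if b = u ∧ a ∈ S then x a * x b else 0)) := by
          simp [Finset.sum_add_distrib, Finset.sum_sub_distrib]
    _ = specRad G + 2 * (x u - x w) * Sw := by
          have t1 : ∑ a, ∑ b, (if a = w ∧ b ∈ S then x a * x b else 0) = x w * Sw := by
            rw [hkey w (fun a b => x a * x b), hSw, Finset.mul_sum]
          have t3 : ∑ a, ∑ b, (if a = u ∧ b ∈ S then x a * x b else 0) = x u * Sw := by
            rw [hkey u (fun a b => x a * x b), hSw, Finset.mul_sum]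
          have t2 : ∑ a, ∑ b, (if b = w ∧ a ∈ S then x a * x b else 0) = x w * Sw := by
            rw [Finset.sum_comm]
            rw [hkey w (fun p q => x q * x p), hSw, Finset.mul_sum]
            exact Finset.sum_congr rfl fun b _ => mul_comm _ _
          have t4 : ∑ a, ∑ b, (if b = u ∧ a ∈ S then x a * x b else 0) = x u * Sw := by
            rw [Finset.sum_comm]
            rw [hkey u (fun p q => x q * x p), hSw, Finset.mul_sum]
            exact Finset.sum_congr rfl fun b _ => mul_comm _ _
          rw [t1, t2, t3, t4, ← hquadform G, hQG]
          ring
  haveI : Nonempty V := hVne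
  have hray := rayleigh_key (hherm H) x hxx
  have hQle : dotProduct x ((adjMat H).mulVec x) ≤ specRad H := hray.1
  have hQge : specRad G ≤ dotProduct x ((adjMat H).mulVec x) := by
    rw [hQH]
    have : 0 ≤ 2 * (x u - x w) * Sw :=
      mul_nonneg (mul_nonneg (by norm_num) (by linarith [hu w])) hSwpos.le
    linarith
  have hQeq : dotProduct x ((adjMat H).mulVec x) = specRad H :=
    le_antisymm hQle (hspecH.trans hQge)
  have hSHG : specRad H = specRad G := le_antisymm hspecH (hQge.trans hQle)
  have heigH : (adjMat H).mulVec x = specRad H • x := hray.2 hQeq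
  -- evaluate eigenvector equations at w
  have hGw : (adjMat G).mulVec x w = specRad G * x w := by
    have := congrFun heig w
    simpa using this
  have hHw : (adjMat H).mulVec x w = specRad G * x w := by
    have := congrFun heigH w
    rw [hSHG] at this
    simpa using this
  have hrow : (adjMat H).mulVec x w = (adjMat G).mulVec x w - Sw := by
    simp only [Matrix.mulVec, dotProduct, adjMat, Matrix.of_apply]
    rw [hSw, Finset.sum_filter, ← Finset.sum_sub_distrib]
    refine Finset.sum_congr rfl fun b _ => ?_
    by_cases hbS : b ∈ S
    · have hG : G.Adj w b := hSadj b hbS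
      have hH : ¬ H.Adj w b := by
        rw [HAdj]
        rintro ⟨hne, ⟨-, hc, -⟩ | ⟨hwu', -⟩ | ⟨hbu, -⟩⟩
        · exact hc ⟨rfl, hbS⟩
        · exact hwu hwu'
        · exact huS (hbu ▸ hbS)
      rw [if_neg hH, if_pos hG, if_pos hbS]
      ring
    · have hHG : H.Adj w b ↔ G.Adj w b := by
        rw [HAdj]
        constructor
        · rintro ⟨hne, ⟨hg, -, -⟩ | ⟨hwu', -⟩ | ⟨-, hwS'⟩⟩
          · exact hg
          · exact absurd hwu' hwu
          · exact absurd hwS' hwS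
        · intro hg
          exact ⟨hg.ne, Or.inl ⟨hg, fun h => hbS h.2, fun h => hwS h.2⟩⟩
      rw [if_congr hHG rfl rfl, if_neg hbS]
      ring
  rw [hHw, hGw] at hrow
  linarith
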